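/- Let A be an abelian category with enough projectives and enough injectives, and let t₁ = (T₁,F₁) and t₂ = (T₂,F₂) be torsion pairs in A with T₁ ⊆ T₂ such that T₁, F₁, T₂, F₂ are all functorially finite in A. Set H = T₂ ∩ F₁. Then the maps Φ(T,F) = (T ∩ F₁, T₂ ∩ F) and Ψ(X,Y) = (T₁∗X, Y∗F₂) restrict to mutually inverse, order-preserving bijections between the set of torsion pairs (T,F) in A with T₁ ⊆ T ⊆ T₂ such that T and F are functorially finite in A, and the set of torsion pairs (X,Y) in H such that X and Y are functorially finite in the full subcategory on H. -/

import Mathlib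

open CategoryTheory Limits

universe v u

variable (A : Type u) [Category.{v} A] [Abelian A]

/-- A class of objects closed under isomorphisms. -/
def IsoClosed (S : Set A) : Prop := ∀ ⦃X Y : A⦄, (X ≅ Y) → X ∈ S → Y ∈ S

/-- `f`, `g` form a short exact sequence `0 → X → Y → Z → 0`. -/
def IsSES {X Y Z : A} (f : X ⟶ Y) (g : Y ⟶ Z) : Prop :=
  ∃ w : f ≫ g = 0, (ShortComplex.mk f g w).ShortExact

/-- A torsion pair in the abelian category `A`: a pair of iso-closed classes with
`Hom(T, F) = 0` such that every object sits in a short exact sequence with kernel in `T`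
and cokernel in `F`. -/
def IsTorsionPair (T F : Set A) : Prop :=
  IsoClosed A T ∧ IsoClosed A F ∧
  (∀ X ∈ T, ∀ Y ∈ F, ∀ f : X ⟶ Y, f = 0) ∧
  (∀ M : A, ∃ (X Y : A) (f : X ⟶ M) (g : M ⟶ Y), IsSES A f g ∧ X ∈ T ∧ Y ∈ F)

/-- `star X Y` is the class of objects `M` admitting a short exact sequence
`0 → B → M → C → 0` with `B ∈ X` and `C ∈ Y`. -/
def star (X Y : Set A) : Set A :=
  {M : A | ∃ (B C : A) (f : B ⟶ M) (g : M ⟶ C), IsSES A f g ∧ B ∈ X ∧ C ∈ Y}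

/-- A torsion pair in a class `H` of objects of `A`: a pair of iso-closed subclasses
`(X, Y)` of `H` such that `Hom(X, Y) = 0` and every object of `H` sits in a short exact
sequence with kernel in `X` and cokernel in `Y`. -/
def IsTorsionPairIn (H X Y : Set A) : Prop :=
  X ⊆ H ∧ Y ⊆ H ∧ IsoClosed A X ∧ IsoClosed A Y ∧
  (∀ B ∈ X, ∀ C ∈ Y, ∀ f : B ⟶ C, f = 0) ∧
  (∀ H₀ ∈ H, ∃ (B C : A) (f : B ⟶ H₀) (g : H₀ ⟶ C),
    IsSES A f g ∧ B ∈ X ∧ C ∈ Y)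

/-- `X` admits a right `C`-approximation: a morphism `f : C₀ ⟶ X` with `C₀ ∈ C` through
which every morphism from an object of `C` to `X` factors. -/
def HasRightApprox (C : Set A) (X : A) : Prop :=
  ∃ (C₀ : A) (f : C₀ ⟶ X), C₀ ∈ C ∧
    ∀ C' ∈ C, ∀ g : C' ⟶ X, ∃ h : C' ⟶ C₀, h ≫ f = g

/-- `X` admits a left `C`-approximation: a morphism `f : X ⟶ C₀` with `C₀ ∈ C` through
which every morphism from `X` to an object of `C` factors. -/
def HasLeftApprox (C : Set A) (X : A) : Prop :=
  ∃ (C₀ : A) (f : X ⟶ C₀), C₀ ∈ C ∧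
    ∀ C' ∈ C, ∀ g : X ⟶ C', ∃ h : C₀ ⟶ C', f ≫ h = g

/-- `C` is functorially finite in `A`: every object of `A` admits a right and a left
`C`-approximation. -/
def FunctoriallyFinite (C : Set A) : Prop :=
  ∀ X : A, HasRightApprox A C X ∧ HasLeftApprox A C X

/-- `C` is functorially finite in the full subcategory on `H`: every object of `H` admits
a right and a left `C`-approximation. -/
def FunctoriallyFiniteIn (H C : Set A) : Prop :=
  ∀ X ∈ H, HasRightApprox A C X ∧ HasLeftApprox A C X

section Toolkit

variable {A}

namespace IsSES

variable {X Y Z : A} {f : X ⟶ Y} {g : Y ⟶ Z}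

lemma w (h : IsSES A f g) : f ≫ g = 0 := h.1

lemma mono (h : IsSES A f g) : Mono f := by
  obtain ⟨w, h⟩ := h; exact h.mono_f

lemma epi (h : IsSES A f g) : Epi g := by
  obtain ⟨w, h⟩ := h; exact h.epi_g

lemma exact (h : IsSES A f g) : (ShortComplex.mk f g h.w).Exact := by
  obtain ⟨w, h⟩ := h; exact h.exact

lemma lift' (h : IsSES A f g) {W : A} (k : W ⟶ Y) (hk : k ≫ g = 0) :
    ∃ l : W ⟶ X, l ≫ f = k := by
  haveI := h.mono
  exact h.exact.lift' k hk

lemma desc' (h : IsSES A f g) {W : A} (k : Y ⟶ W) (hk : f ≫ k = 0) :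
    ∃ l : Z ⟶ W, g ≫ l = k := by
  haveI := h.epi
  exact h.exact.desc' k hk

lemma isIso_g_of_isZero (h : IsSES A f g) (hZ : IsZero X) : IsIso g := by
  haveI := h.epi
  have hf : f = 0 := hZ.eq_of_src f 0
  haveI : Mono g := h.exact.mono_g hf
  exact isIso_of_mono_of_epi g

lemma isIso_f_of_isZero (h : IsSES A f g) (hZ : IsZero Z) : IsIso f := by
  haveI := h.mono
  have hg : g = 0 := hZ.eq_of_tgt g 0
  haveI : Epi f := h.exact.epi_f hg
  exact isIso_of_mono_of_epi f

end IsSES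

lemma isSES_of_iso {X Y Z X' Y' Z' : A} {f : X ⟶ Y} {g : Y ⟶ Z} (h : IsSES A f g)
    (e₁ : X ≅ X') (e₂ : Y ≅ Y') (e₃ : Z ≅ Z') {f' : X' ⟶ Y'} {g' : Y' ⟶ Z'}
    (hf : f ≫ e₂.hom = e₁.hom ≫ f') (hg : g ≫ e₃.hom = e₂.hom ≫ g') :
    IsSES A f' g' := by
  obtain ⟨w, hse⟩ := h
  have w' : f' ≫ g' = 0 := by
    have : e₁.hom ≫ f' ≫ g' = 0 := by
      rw [← Category.assoc, ← hf, Category.assoc, ← hg, ← Category.assoc, w, zero_comp]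
    simpa using e₁.inv ≫= this
  refine ⟨w', ?_⟩
  exact ShortComplex.shortExact_of_iso
    (ShortComplex.isoMk e₁ e₂ e₃ hf.symm hg.symm : ShortComplex.mk f g w ≅ ShortComplex.mk f' g' w') hse

lemma isSES_cokernel {X Y : A} (f : X ⟶ Y) [Mono f] : IsSES A f (cokernel.π f) := by
  refine ⟨cokernel.condition f, ?_⟩
  exact ShortComplex.ShortExact.mk'
    (ShortComplex.exact_of_g_is_cokernel _ (cokernelIsCokernel f)) inferInstance inferInstance

lemma isSES_kernel {Y Z : A} (g : Y ⟶ Z) [Epi g] : IsSES A (kernel.ι g) g := by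
  refine ⟨kernel.condition g, ?_⟩
  exact ShortComplex.ShortExact.mk'
    (ShortComplex.exact_of_f_is_kernel _ (kernelIsKernel g)) inferInstance inferInstance

lemma isSES_zero_left {Z X : A} (hZ : IsZero Z) : IsSES A (0 : Z ⟶ X) (𝟙 X) := by
  have w : (0 : Z ⟶ X) ≫ 𝟙 X = 0 := by simp
  refine ⟨w, ?_⟩
  haveI : Mono (0 : Z ⟶ X) := ⟨fun u v _ => hZ.eq_of_tgt u v⟩
  exact ShortComplex.ShortExact.mk'
    ((ShortComplex.exact_iff_mono _ rfl).2 inferInstance) inferInstance inferInstance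

lemma isSES_zero_right {X Z : A} (hZ : IsZero Z) : IsSES A (𝟙 X) (0 : X ⟶ Z) := by
  have w : 𝟙 X ≫ (0 : X ⟶ Z) = 0 := by simp
  refine ⟨w, ?_⟩
  haveI : Epi (0 : X ⟶ Z) := ⟨fun u v _ => hZ.eq_of_src u v⟩
  exact ShortComplex.ShortExact.mk'
    ((ShortComplex.exact_iff_epi _ rfl).2 inferInstance) inferInstance inferInstance

end Toolkit

section Toolkit2

variable {A}

lemma isSES_of_exact_cond {X Y Z : A} {f : X ⟶ Y} {g : Y ⟶ Z} (w : f ≫ g = 0)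
    (hm : Mono f) (he : Epi g)
    (hex : ∀ ⦃V : A⦄ (z : V ⟶ Y), z ≫ g = 0 →
      ∃ (V' : A) (π : V' ⟶ V) (_ : Epi π) (l : V' ⟶ X), π ≫ z = l ≫ f) :
    IsSES A f g :=
  ⟨w, ShortComplex.ShortExact.mk'
    (((ShortComplex.mk f g w).exact_iff_exact_up_to_refinements).2 hex) hm he⟩

lemma isSES_pullback {X Y Z W : A} {f : X ⟶ Y} {g : Y ⟶ Z} (h : IsSES A f g) (p : W ⟶ Z) :
    IsSES A (pullback.lift f (0 : X ⟶ W) (by rw [h.w, zero_comp]) : X ⟶ pullback g p)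
      (pullback.snd g p) := by
  haveI := h.epi
  haveI := h.mono
  refine isSES_of_exact_cond (pullback.lift_snd _ _ _)
    (mono_of_mono_fac (pullback.lift_fst f (0 : X ⟶ W) _)) inferInstance ?_
  intro V z hz
  obtain ⟨l, hl⟩ := h.lift' (z ≫ pullback.fst g p)
    (by rw [Category.assoc, pullback.condition, ← Category.assoc, hz, zero_comp])
  refine ⟨V, 𝟙 V, inferInstance, l, ?_⟩
  rw [Category.id_comp]
  apply pullback.hom_ext
  · rw [Category.assoc, pullback.lift_fst]; exact hl.symm
  · rw [hz, Category.assoc, pullback.lift_snd, comp_zero]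

lemma isSES_pushout {X Y Z W : A} {f : X ⟶ Y} {g : Y ⟶ Z} (h : IsSES A f g) (p : X ⟶ W) :
    IsSES A (pushout.inl p f)
      (pushout.desc (0 : W ⟶ Z) g (by rw [comp_zero, h.w]) : pushout p f ⟶ Z) := by
  haveI := h.mono
  haveI := h.epi
  set q : pushout p f ⟶ Z := pushout.desc (0 : W ⟶ Z) g (by rw [comp_zero, h.w]) with hq
  have w : pushout.inl p f ≫ q = 0 := pushout.inl_desc _ _ _
  have hrq : pushout.inr p f ≫ q = g := pushout.inr_desc _ _ _
  haveI hepi : Epi q := epi_of_epi_fac hrq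
  refine ⟨w, ShortComplex.ShortExact.mk'
    (ShortComplex.exact_of_g_is_cokernel _ ?_) inferInstance hepi⟩
  have hcond : ∀ {V : A} (k : pushout p f ⟶ V), pushout.inl p f ≫ k = 0 →
      f ≫ pushout.inr p f ≫ k = 0 := by
    intro V k hk
    rw [← Category.assoc, ← pushout.condition, Category.assoc, hk, comp_zero]
  refine CokernelCofork.IsColimit.ofπ _ _
    (fun {V} k hk => (h.desc' (pushout.inr p f ≫ k) (hcond k hk)).choose) ?_ ?_
  · intro V k hk
    have hc := (h.desc' (pushout.inr p f ≫ k) (hcond k hk)).choose_spec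
    apply pushout.hom_ext
    · rw [← Category.assoc, pushout.inl_desc, zero_comp, hk]
    · rw [← Category.assoc, pushout.inr_desc]
      exact hc
  · intro V k hk m hm
    rw [← cancel_epi q, hm]
    have hc := (h.desc' (pushout.inr p f ≫ k) (hcond k hk)).choose_spec
    apply pushout.hom_ext
    · rw [← Category.assoc, pushout.inl_desc, zero_comp, hk]
    · rw [← Category.assoc, pushout.inr_desc]
      exact hc.symm

lemma isSES_biprod_inl (X W : A) :
    IsSES A (biprod.inl : X ⟶ X ⊞ W) (biprod.snd : X ⊞ W ⟶ W) := by
  refine isSES_of_exact_cond (by simp) inferInstance inferInstance ?_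
  intro V z hz
  refine ⟨V, 𝟙 V, inferInstance, z ≫ biprod.fst, ?_⟩
  rw [Category.id_comp]
  apply biprod.hom_ext <;> simp [hz]

lemma isSES_biprod_map {X Y Z W : A} {f : X ⟶ Y} {g : Y ⟶ Z} (h : IsSES A f g) :
    IsSES A (biprod.map f (𝟙 W)) (biprod.fst ≫ g : Y ⊞ W ⟶ Z) := by
  haveI := h.mono
  haveI := h.epi
  refine isSES_of_exact_cond ?_ ?_ (epi_of_epi_fac (f := (biprod.inl : Y ⟶ Y ⊞ W))
    (by rw [← Category.assoc, biprod.inl_fst, Category.id_comp])) ?_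
  · rw [← Category.assoc, biprod.map_fst, Category.assoc, h.w, comp_zero]
  · rw [Preadditive.mono_iff_cancel_zero]
    intro V z hz
    have h1 : z ≫ biprod.fst = 0 := by
      have := hz =≫ (biprod.fst : Y ⊞ W ⟶ Y)
      simp only [Category.assoc, biprod.map_fst, zero_comp] at this
      rw [← Category.assoc] at this
      exact zero_of_comp_mono f this
    have h2 : z ≫ biprod.snd = 0 := by
      have := hz =≫ (biprod.snd : Y ⊞ W ⟶ W)
      simpa using this
    apply biprod.hom_ext <;> simp [h1, h2]
  · intro V z hz
    obtain ⟨l, hl⟩ := h.lift' (z ≫ biprod.fst) (by rwa [Category.assoc])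
    refine ⟨V, 𝟙 V, inferInstance, biprod.lift l (z ≫ biprod.snd), ?_⟩
    rw [Category.id_comp]
    apply biprod.hom_ext <;> simp [hl]

/-- Third isomorphism theorem style SES: given `U ↪ T ↪ M`, we get
`0 → T/U → M/U → M/T → 0`. -/
lemma isSES_third_iso {U T M Q₁ Q₂ Q₃ : A} {i : U ⟶ T} {j : T ⟶ M}
    {p₁ : T ⟶ Q₁} {p₂ : M ⟶ Q₂} {p₃ : M ⟶ Q₃}
    (h₁ : IsSES A i p₁) (h₂ : IsSES A (i ≫ j) p₂) (h₃ : IsSES A j p₃) :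
    ∃ (a : Q₁ ⟶ Q₂) (b : Q₂ ⟶ Q₃), IsSES A a b ∧ p₁ ≫ a = j ≫ p₂ ∧ p₂ ≫ b = p₃ := by
  haveI := h₁.epi
  haveI := h₂.epi
  haveI := h₃.epi
  haveI := h₃.mono
  obtain ⟨a, ha⟩ := h₁.desc' (j ≫ p₂) (by rw [← Category.assoc]; exact h₂.w)
  obtain ⟨b, hb⟩ := h₂.desc' p₃ (by rw [Category.assoc, h₃.w, comp_zero])
  have hmono : Mono a := by
    rw [Preadditive.mono_iff_cancel_zero]
    intro V z hz
    haveI : Epi (pullback.snd p₁ z) := inferInstance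
    have hcond : pullback.fst p₁ z ≫ p₁ = pullback.snd p₁ z ≫ z := pullback.condition
    have h0 : (pullback.fst p₁ z ≫ j) ≫ p₂ = 0 := by
      have : pullback.fst p₁ z ≫ p₁ ≫ a = pullback.snd p₁ z ≫ z ≫ a := by
        rw [← Category.assoc, hcond, Category.assoc]
      rw [Category.assoc, ← ha, this, hz, comp_zero]
    obtain ⟨v, hv⟩ := h₂.lift' (pullback.fst p₁ z ≫ j) h0
    have hvi : v ≫ i = pullback.fst p₁ z := by
      rw [← cancel_mono j, Category.assoc]; exact hv
    have : pullback.snd p₁ z ≫ z = 0 := by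
      rw [← hcond, ← hvi, Category.assoc, h₁.w, comp_zero]
    exact zero_of_epi_comp _ this
  have hepi : Epi b := epi_of_epi_fac hb
  refine ⟨a, b, isSES_of_exact_cond ?_ hmono hepi ?_, ha, hb⟩
  · rw [← cancel_epi p₁, ← Category.assoc, ha, Category.assoc, hb, h₃.w, comp_zero]
  · intro V z hz
    refine ⟨pullback p₂ z, pullback.snd p₂ z, inferInstance, ?_⟩
    have hcond : pullback.fst p₂ z ≫ p₂ = pullback.snd p₂ z ≫ z := pullback.condition
    have h0 : pullback.fst p₂ z ≫ p₃ = 0 := by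
      rw [← hb, ← Category.assoc, hcond, Category.assoc, hz, comp_zero]
    obtain ⟨v, hv⟩ := h₃.lift' (pullback.fst p₂ z) h0
    refine ⟨v ≫ p₁, ?_⟩
    rw [Category.assoc, ha, ← Category.assoc, hv, hcond]

/-- Kernel of a composite of two epis from SESs: `0 → a → K → x → 0` where
`K = ker (g₁ ≫ g₂)`. -/
lemma isSES_ker_comp {a t h x y : A} {f₁ : a ⟶ t} {g₁ : t ⟶ h} {f₂ : x ⟶ h} {g₂ : h ⟶ y}
    (h₁ : IsSES A f₁ g₁) (h₂ : IsSES A f₂ g₂) :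
    ∃ (K : A) (ι : K ⟶ t) (α : a ⟶ K) (β : K ⟶ x),
      IsSES A ι (g₁ ≫ g₂) ∧ IsSES A α β ∧ α ≫ ι = f₁ ∧ ι ≫ g₁ = β ≫ f₂ := by
  haveI := h₁.epi
  haveI := h₂.epi
  haveI := h₁.mono
  haveI := h₂.mono
  haveI : Epi (g₁ ≫ g₂) := epi_comp _ _
  refine ⟨kernel (g₁ ≫ g₂), kernel.ι _, ?_⟩
  obtain ⟨β, hβ⟩ := h₂.lift' (kernel.ι (g₁ ≫ g₂) ≫ g₁) (by rw [Category.assoc]; exact kernel.condition _)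
  have hα : f₁ ≫ g₁ ≫ g₂ = 0 := by rw [← Category.assoc, h₁.w, zero_comp]
  refine ⟨kernel.lift _ f₁ hα, β, isSES_kernel _, ?_, kernel.lift_ι _ _ _, hβ.symm⟩
  have hmono : Mono (kernel.lift (g₁ ≫ g₂) f₁ hα) :=
    mono_of_mono_fac (kernel.lift_ι (g₁ ≫ g₂) f₁ hα)
  have hepi : Epi β := by
    haveI : Epi (pullback.snd g₁ f₂) := inferInstance
    have hcond : pullback.fst g₁ f₂ ≫ g₁ = pullback.snd g₁ f₂ ≫ f₂ := pullback.condition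
    have h0 : pullback.fst g₁ f₂ ≫ g₁ ≫ g₂ = 0 := by
      rw [← Category.assoc, hcond, Category.assoc, h₂.w, comp_zero]
    have hw : (kernel.lift _ (pullback.fst g₁ f₂) h0) ≫ β ≫ f₂ = pullback.snd g₁ f₂ ≫ f₂ := by
      rw [hβ, ← Category.assoc, kernel.lift_ι]
      exact hcond
    have : (kernel.lift _ (pullback.fst g₁ f₂) h0) ≫ β = pullback.snd g₁ f₂ := by
      rw [← cancel_mono f₂, Category.assoc]; exact hw
    exact epi_of_epi_fac this
  refine isSES_of_exact_cond ?_ hmono hepi ?_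
  · rw [← cancel_mono f₂, Category.assoc, hβ, zero_comp, ← Category.assoc, kernel.lift_ι]
    exact h₁.w
  · intro V z hz
    have h0 : (z ≫ kernel.ι (g₁ ≫ g₂)) ≫ g₁ = 0 := by
      rw [Category.assoc, ← hβ, ← Category.assoc, hz, zero_comp]
    obtain ⟨v, hv⟩ := h₁.lift' (z ≫ kernel.ι (g₁ ≫ g₂)) h0
    refine ⟨V, 𝟙 V, inferInstance, v, ?_⟩
    rw [Category.id_comp, ← cancel_mono (kernel.ι (g₁ ≫ g₂)), Category.assoc, kernel.lift_ι, hv]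

end Toolkit2

section TorsionLemmas

variable {A}
variable {T F : Set A}

lemma IsTorsionPair.homZero (h : IsTorsionPair A T F) {M N : A} (hM : M ∈ T) (hN : N ∈ F)
    (φ : M ⟶ N) : φ = 0 := h.2.2.1 M hM N hN φ

lemma IsTorsionPair.mem_torsion_iff (h : IsTorsionPair A T F) {M : A} :
    M ∈ T ↔ ∀ N ∈ F, ∀ φ : M ⟶ N, φ = 0 := by
  refine ⟨fun hM N hN φ => h.2.2.1 M hM N hN φ, fun hv => ?_⟩
  obtain ⟨X, Y, f, g, hs, hX, hY⟩ := h.2.2.2 M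
  haveI := hs.epi
  haveI : IsIso f := hs.isIso_f_of_isZero (IsZero.of_epi_eq_zero g (hv Y hY g))
  exact h.1 (asIso f) hX

lemma IsTorsionPair.mem_torsionFree_iff (h : IsTorsionPair A T F) {M : A} :
    M ∈ F ↔ ∀ N ∈ T, ∀ φ : N ⟶ M, φ = 0 := by
  refine ⟨fun hM N hN φ => h.2.2.1 N hN M hM φ, fun hv => ?_⟩
  obtain ⟨X, Y, f, g, hs, hX, hY⟩ := h.2.2.2 M
  haveI := hs.mono
  haveI : IsIso g := hs.isIso_g_of_isZero (IsZero.of_mono_eq_zero f (hv X hX f))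
  exact h.2.1 (asIso g).symm hY

lemma IsTorsionPair.quot_mem (h : IsTorsionPair A T F) {M Q : A} (hM : M ∈ T)
    (g : M ⟶ Q) (hg : Epi g) : Q ∈ T := by
  rw [h.mem_torsion_iff]
  intro N hN φ
  haveI := hg
  exact zero_of_epi_comp g (h.homZero hM hN (g ≫ φ))

lemma IsTorsionPair.sub_mem (h : IsTorsionPair A T F) {S M : A} (hM : M ∈ F)
    (f : S ⟶ M) (hf : Mono f) : S ∈ F := by
  rw [h.mem_torsionFree_iff]
  intro N hN φ
  haveI := hf
  exact zero_of_comp_mono f (h.homZero hN hM (φ ≫ f))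

lemma IsTorsionPair.ext_mem (h : IsTorsionPair A T F) {X M Y : A} {f : X ⟶ M} {g : M ⟶ Y}
    (hs : IsSES A f g) (hX : X ∈ T) (hY : Y ∈ T) : M ∈ T := by
  rw [h.mem_torsion_iff]
  intro N hN φ
  obtain ⟨ψ, hψ⟩ := hs.desc' φ (by rw [h.homZero hX hN (f ≫ φ)])
  rw [← hψ, h.homZero hY hN ψ, comp_zero]

lemma IsTorsionPair.extFree_mem (h : IsTorsionPair A T F) {X M Y : A} {f : X ⟶ M} {g : M ⟶ Y}
    (hs : IsSES A f g) (hX : X ∈ F) (hY : Y ∈ F) : M ∈ F := by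
  rw [h.mem_torsionFree_iff]
  intro N hN φ
  obtain ⟨ψ, hψ⟩ := hs.lift' φ (by rw [h.homZero hN hY (φ ≫ g)])
  rw [← hψ, h.homZero hN hX ψ, zero_comp]

lemma IsTorsionPair.zero_mem_torsion (h : IsTorsionPair A T F) {Z : A} (hZ : IsZero Z) :
    Z ∈ T := by
  rw [h.mem_torsion_iff]
  exact fun N _ φ => hZ.eq_zero_of_src φ

lemma IsTorsionPair.zero_mem_torsionFree (h : IsTorsionPair A T F) {Z : A} (hZ : IsZero Z) :
    Z ∈ F := by
  rw [h.mem_torsionFree_iff]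
  exact fun N _ φ => hZ.eq_zero_of_tgt φ

end TorsionLemmas

section HeartLemmas

variable {A}
variable {H X Y : Set A}

lemma IsTorsionPairIn.homZero (h : IsTorsionPairIn A H X Y) {M N : A} (hM : M ∈ X) (hN : N ∈ Y)
    (φ : M ⟶ N) : φ = 0 := h.2.2.2.2.1 M hM N hN φ

lemma IsTorsionPairIn.mem_X_iff (h : IsTorsionPairIn A H X Y) {M : A} (hM : M ∈ H) :
    M ∈ X ↔ ∀ N ∈ Y, ∀ φ : M ⟶ N, φ = 0 := by
  refine ⟨fun hM' N hN φ => h.homZero hM' hN φ, fun hv => ?_⟩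
  obtain ⟨B, C, f, g, hs, hB, hC⟩ := h.2.2.2.2.2 M hM
  haveI := hs.epi
  haveI : IsIso f := hs.isIso_f_of_isZero (IsZero.of_epi_eq_zero g (hv C hC g))
  exact h.2.2.1 (asIso f) hB

lemma IsTorsionPairIn.mem_Y_iff (h : IsTorsionPairIn A H X Y) {M : A} (hM : M ∈ H) :
    M ∈ Y ↔ ∀ N ∈ X, ∀ φ : N ⟶ M, φ = 0 := by
  refine ⟨fun hM' N hN φ => h.homZero hN hM' φ, fun hv => ?_⟩
  obtain ⟨B, C, f, g, hs, hB, hC⟩ := h.2.2.2.2.2 M hM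
  haveI := hs.mono
  haveI : IsIso g := hs.isIso_g_of_isZero (IsZero.of_mono_eq_zero f (hv B hB f))
  exact h.2.2.2.1 (asIso g).symm hC

lemma IsTorsionPairIn.zero_mem_X (h : IsTorsionPairIn A H X Y) {Z : A} (hZ : IsZero Z)
    (hZH : Z ∈ H) : Z ∈ X :=
  (h.mem_X_iff hZH).2 fun N _ φ => hZ.eq_zero_of_src φ

lemma IsTorsionPairIn.zero_mem_Y (h : IsTorsionPairIn A H X Y) {Z : A} (hZ : IsZero Z)
    (hZH : Z ∈ H) : Z ∈ Y :=
  (h.mem_Y_iff hZH).2 fun N _ φ => hZ.eq_zero_of_tgt φ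

lemma IsTorsionPairIn.quot_mem (h : IsTorsionPairIn A H X Y) {M Q : A} (hM : M ∈ X)
    (g : M ⟶ Q) (hg : Epi g) (hQ : Q ∈ H) : Q ∈ X := by
  rw [h.mem_X_iff hQ]
  intro N hN φ
  haveI := hg
  exact zero_of_epi_comp g (h.homZero hM hN (g ≫ φ))

lemma IsTorsionPairIn.sub_mem (h : IsTorsionPairIn A H X Y) {S M : A} (hM : M ∈ Y)
    (f : S ⟶ M) (hf : Mono f) (hS : S ∈ H) : S ∈ Y := by
  rw [h.mem_Y_iff hS]
  intro N hN φ
  haveI := hf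
  exact zero_of_comp_mono f (h.homZero hN hM (φ ≫ f))

end HeartLemmas

section StarLemmas

open ZeroObject

variable {A}

lemma star_isoClosed (S₁ S₂ : Set A) : IsoClosed A (star A S₁ S₂) := by
  rintro M M' e ⟨B, C, f, g, hs, hB, hC⟩
  exact ⟨B, C, f ≫ e.hom, e.inv ≫ g,
    isSES_of_iso hs (Iso.refl B) e (Iso.refl C) (by simp) (by simp), hB, hC⟩

lemma subset_star_left {S₁ S₂ : Set A} (h0 : ∀ {Z : A}, IsZero Z → Z ∈ S₂) :
    S₁ ⊆ star A S₁ S₂ := by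
  intro M hM
  exact ⟨M, 0, 𝟙 M, 0, isSES_zero_right (isZero_zero A), hM, h0 (isZero_zero A)⟩

lemma subset_star_right {S₁ S₂ : Set A} (h0 : ∀ {Z : A}, IsZero Z → Z ∈ S₁) :
    S₂ ⊆ star A S₁ S₂ := by
  intro M hM
  exact ⟨0, M, 0, 𝟙 M, isSES_zero_left (isZero_zero A), h0 (isZero_zero A), hM⟩

end StarLemmas

section MainLemmas

variable {A}
variable {T₁ F₁ T₂ F₂ : Set A}

lemma tp_hasRightApprox_torsion {T F : Set A} (h : IsTorsionPair A T F) (M : A) :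
    HasRightApprox A T M := by
  obtain ⟨B, C, f, g, hs, hB, hC⟩ := h.2.2.2 M
  exact ⟨B, f, hB, fun C' hC' φ => hs.lift' φ (h.homZero hC' hC (φ ≫ g) ▸ rfl)⟩

lemma tp_hasLeftApprox_free {T F : Set A} (h : IsTorsionPair A T F) (M : A) :
    HasLeftApprox A F M := by
  obtain ⟨B, C, f, g, hs, hB, hC⟩ := h.2.2.2 M
  exact ⟨C, g, hC, fun C' hC' φ => hs.desc' φ (h.homZero hB hC' (f ≫ φ) ▸ rfl)⟩

lemma free_subset (h₁ : IsTorsionPair A T₁ F₁) {T F : Set A} (h : IsTorsionPair A T F)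
    (hT1 : T₁ ⊆ T) : F ⊆ F₁ := fun N hN =>
  (h₁.mem_torsionFree_iff).2 fun P hP φ => h.homZero (hT1 hP) hN φ

lemma phi_isTorsionPairIn (h₁ : IsTorsionPair A T₁ F₁) (h₂ : IsTorsionPair A T₂ F₂)
    {T F : Set A} (h : IsTorsionPair A T F) (hT1 : T₁ ⊆ T) (hT2 : T ⊆ T₂) :
    IsTorsionPairIn A (T₂ ∩ F₁) (T ∩ F₁) (T₂ ∩ F) := by
  refine ⟨fun M hM => ⟨hT2 hM.1, hM.2⟩, fun M hM => ⟨hM.1, free_subset h₁ h hT1 hM.2⟩,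
    fun M N e hM => ⟨h.1 e hM.1, h₁.2.1 e hM.2⟩,
    fun M N e hM => ⟨h₂.1 e hM.1, h.2.1 e hM.2⟩,
    fun B hB C hC φ => h.homZero hB.1 hC.2 φ, ?_⟩
  rintro M ⟨hMT₂, hMF₁⟩
  obtain ⟨B, C, f, g, hs, hB, hC⟩ := h.2.2.2 M
  exact ⟨B, C, f, g, hs, ⟨hB, h₁.sub_mem hMF₁ f hs.mono⟩, ⟨h₂.quot_mem hMT₂ g hs.epi, hC⟩⟩

lemma phi_ff (h₁ : IsTorsionPair A T₁ F₁) (h₂ : IsTorsionPair A T₂ F₂)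
    {T F : Set A} (h : IsTorsionPair A T F) (hT1 : T₁ ⊆ T) (hT2 : T ⊆ T₂)
    (hT : FunctoriallyFinite A T) (hF : FunctoriallyFinite A F) :
    FunctoriallyFiniteIn A (T₂ ∩ F₁) (T ∩ F₁) ∧ FunctoriallyFiniteIn A (T₂ ∩ F₁) (T₂ ∩ F) := by
  constructor
  · intro M hM
    constructor
    · -- right (T ∩ F₁)-approximation: torsion subobject
      obtain ⟨B, C, f, g, hs, hB, hC⟩ := h.2.2.2 M
      exact ⟨B, f, ⟨hB, h₁.sub_mem hM.2 f hs.mono⟩,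
        fun C' hC' φ => hs.lift' φ (h.homZero hC'.1 hC (φ ≫ g) ▸ rfl)⟩
    · -- left (T ∩ F₁)-approximation
      obtain ⟨T₀, ℓ, hT₀, hfac⟩ := (hT M).2
      obtain ⟨B, C, f, g, hs, hB, hC⟩ := h₁.2.2.2 T₀
      refine ⟨C, ℓ ≫ g, ⟨h.quot_mem hT₀ g hs.epi, hC⟩, ?_⟩
      intro C' hC' φ
      obtain ⟨ψ, hψ⟩ := hfac C' hC'.1 φ
      obtain ⟨ρ, hρ⟩ := hs.desc' ψ (h₁.homZero hB hC'.2 (f ≫ ψ) ▸ rfl)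
      exact ⟨ρ, by rw [Category.assoc, hρ, hψ]⟩
  · intro M hM
    constructor
    · -- right (T₂ ∩ F)-approximation
      obtain ⟨F₀, r, hF₀, hfac⟩ := (hF M).1
      obtain ⟨B, C, f, g, hs, hB, hC⟩ := h₂.2.2.2 F₀
      refine ⟨B, f ≫ r, ⟨hB, h.sub_mem hF₀ f hs.mono⟩, ?_⟩
      intro C' hC' φ
      obtain ⟨ψ, hψ⟩ := hfac C' hC'.2 φ
      obtain ⟨ρ, hρ⟩ := hs.lift' ψ (h₂.homZero hC'.1 hC (ψ ≫ g) ▸ rfl)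
      exact ⟨ρ, by rw [← Category.assoc, hρ, hψ]⟩
    · -- left (T₂ ∩ F)-approximation: torsion-free quotient
      obtain ⟨B, C, f, g, hs, hB, hC⟩ := h.2.2.2 M
      exact ⟨C, g, ⟨h₂.quot_mem hM.1 g hs.epi, hC⟩,
        fun C' hC' φ => hs.desc' φ (h.homZero hB hC'.2 (f ≫ φ) ▸ rfl)⟩

lemma psiPhi_torsion (h₁ : IsTorsionPair A T₁ F₁) {T F : Set A} (h : IsTorsionPair A T F)
    (hT1 : T₁ ⊆ T) : star A T₁ (T ∩ F₁) = T := by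
  apply Set.eq_of_subset_of_subset
  · rintro M ⟨B, C, f, g, hs, hB, hC⟩
    exact h.ext_mem hs (hT1 hB) hC.1
  · intro M hM
    obtain ⟨B, C, f, g, hs, hB, hC⟩ := h₁.2.2.2 M
    exact ⟨B, C, f, g, hs, hB, ⟨h.quot_mem hM g hs.epi, hC⟩⟩

lemma psiPhi_free (h₂ : IsTorsionPair A T₂ F₂) {T F : Set A} (h : IsTorsionPair A T F)
    (hT2 : T ⊆ T₂) : star A (T₂ ∩ F) F₂ = F := by
  have hF₂F : F₂ ⊆ F := fun N hN =>
    (h.mem_torsionFree_iff).2 fun P hP φ => h₂.homZero (hT2 hP) hN φ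
  apply Set.eq_of_subset_of_subset
  · rintro M ⟨B, C, f, g, hs, hB, hC⟩
    exact h.extFree_mem hs hB.2 (hF₂F hC)
  · intro M hM
    obtain ⟨B, C, f, g, hs, hB, hC⟩ := h₂.2.2.2 M
    exact ⟨B, C, f, g, hs, ⟨hB, h.sub_mem hM f hs.mono⟩, hC⟩

lemma phiPsi_X (h₁ : IsTorsionPair A T₁ F₁) {X Y : Set A}
    (hH : IsTorsionPairIn A (T₂ ∩ F₁) X Y) : (star A T₁ X) ∩ F₁ = X := by
  apply Set.eq_of_subset_of_subset
  · rintro M ⟨⟨B, C, f, g, hs, hB, hC⟩, hMF₁⟩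
    have hBF₁ : B ∈ F₁ := h₁.sub_mem hMF₁ f hs.mono
    have hBz : IsZero B := (IsZero.iff_id_eq_zero B).2 (h₁.homZero hB hBF₁ (𝟙 B))
    haveI : IsIso g := hs.isIso_g_of_isZero hBz
    exact hH.2.2.1 (asIso g).symm hC
  · intro M hM
    exact ⟨subset_star_right (fun {Z} hZ => h₁.zero_mem_torsion hZ) hM, (hH.1 hM).2⟩

lemma phiPsi_Y (h₂ : IsTorsionPair A T₂ F₂) {X Y : Set A}
    (hH : IsTorsionPairIn A (T₂ ∩ F₁) X Y) : T₂ ∩ (star A Y F₂) = Y := by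
  apply Set.eq_of_subset_of_subset
  · rintro M ⟨hMT₂, ⟨B, C, f, g, hs, hB, hC⟩⟩
    have hCT₂ : C ∈ T₂ := h₂.quot_mem hMT₂ g hs.epi
    have hCz : IsZero C := (IsZero.iff_id_eq_zero C).2 (h₂.homZero hCT₂ hC (𝟙 C))
    haveI : IsIso f := hs.isIso_f_of_isZero hCz
    exact hH.2.2.2.1 (asIso f) hB
  · intro M hM
    exact ⟨(hH.2.1 hM).1, subset_star_left (fun {Z} hZ => h₂.zero_mem_torsionFree hZ) hM⟩

lemma psi_isTorsionPair (h₁ : IsTorsionPair A T₁ F₁) (h₂ : IsTorsionPair A T₂ F₂)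
    (h12 : T₁ ⊆ T₂) {X Y : Set A} (hH : IsTorsionPairIn A (T₂ ∩ F₁) X Y) :
    IsTorsionPair A (star A T₁ X) (star A Y F₂) := by
  have hF₂F₁ : F₂ ⊆ F₁ := fun N hN =>
    (h₁.mem_torsionFree_iff).2 fun P hP φ => h₂.homZero (h12 hP) hN φ
  refine ⟨star_isoClosed _ _, star_isoClosed _ _, ?_, ?_⟩
  · -- Hom vanishing
    rintro M ⟨a, x, fa, gx, hsM, ha, hx⟩ N ⟨y, f2, fy, gf2, hsN, hy, hf2⟩ φ
    have hNF₁ : N ∈ F₁ := h₁.extFree_mem hsN (hH.2.1 hy).2 (hF₂F₁ hf2)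
    have step1 : φ ≫ gf2 = 0 := by
      obtain ⟨ψ, hψ⟩ := hsM.desc' (φ ≫ gf2) (h₂.homZero (h12 ha) hf2 _)
      rw [← hψ, h₂.homZero (hH.1 hx).1 hf2 ψ, comp_zero]
    obtain ⟨χ, hχ⟩ := hsN.lift' φ step1
    haveI := hsN.mono
    have hfaχ : fa ≫ χ = 0 := by
      have hz : (fa ≫ χ) ≫ fy = 0 := by
        rw [Category.assoc, hχ, h₁.homZero ha hNF₁ (fa ≫ φ)]
      exact zero_of_comp_mono fy hz
    obtain ⟨ρ, hρ⟩ := hsM.desc' χ hfaχ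
    rw [← hχ, ← hρ, hH.homZero hx hy ρ, comp_zero, zero_comp]
  · -- decomposition
    intro M
    obtain ⟨t, f2, jt, pf2, hs2, ht, hf2⟩ := h₂.2.2.2 M
    obtain ⟨a, h0, ia, ph, hs1, ha, hh0F⟩ := h₁.2.2.2 t
    have hh0 : h0 ∈ T₂ ∩ F₁ := ⟨h₂.quot_mem ht ph hs1.epi, hh0F⟩
    obtain ⟨x, y, fx, gy, hsH, hx, hy⟩ := hH.2.2.2.2.2 h0 hh0
    obtain ⟨K, ι, α, β, hsKy, hsax, hαι, hcomm⟩ := isSES_ker_comp hs1 hsH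
    haveI := hsKy.mono
    haveI := hs2.mono
    haveI : Mono (ι ≫ jt) := mono_comp _ _
    have hsMK : IsSES A (ι ≫ jt) (cokernel.π (ι ≫ jt)) := isSES_cokernel _
    obtain ⟨u, v, hsuv, hu1, hu2⟩ := isSES_third_iso hsKy hsMK hs2
    exact ⟨K, cokernel (ι ≫ jt), ι ≫ jt, cokernel.π _, hsMK,
      ⟨a, x, α, β, hsax, ha, hx⟩, ⟨y, f2, u, v, hsuv, hy, hf2⟩⟩

end MainLemmas

section HeavyLemmas

variable {A}
variable {T₁ F₁ T₂ F₂ : Set A}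

lemma isSES_pullback'' {X Y Z W : A} {f : X ⟶ Y} {g : Y ⟶ Z} (h : IsSES A f g) (p : W ⟶ Z)
    {j : X ⟶ pullback g p} (hj : j ≫ pullback.fst g p = f) (hj2 : j ≫ pullback.snd g p = 0) :
    IsSES A j (pullback.snd g p) := by
  have hj' : j = pullback.lift f (0 : X ⟶ W) (by rw [h.w, zero_comp]) := by
    apply pullback.hom_ext
    · rw [hj, pullback.lift_fst]
    · rw [hj2, pullback.lift_snd]
  rw [hj']
  exact isSES_pullback h p

lemma isSES_pushout'' {X Y Z W : A} {f : X ⟶ Y} {g : Y ⟶ Z} (h : IsSES A f g) (p : X ⟶ W)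
    {q : pushout p f ⟶ Z} (hq : pushout.inr p f ≫ q = g) (hq2 : pushout.inl p f ≫ q = 0) :
    IsSES A (pushout.inl p f) q := by
  have hq' : q = pushout.desc (0 : W ⟶ Z) g (by rw [comp_zero, h.w]) := by
    apply pushout.hom_ext
    · rw [hq2, pushout.inl_desc]
    · rw [hq, pushout.inr_desc]
  rw [hq']
  exact isSES_pushout h p

lemma star_hasLeftApprox [EnoughProjectives A] (h₁ : IsTorsionPair A T₁ F₁)
    (h₂ : IsTorsionPair A T₂ F₂)
    (hT₁ : FunctoriallyFinite A T₁) (hT₂ : FunctoriallyFinite A T₂)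
    {X Y : Set A} (hH : IsTorsionPairIn A (T₂ ∩ F₁) X Y)
    (hX : FunctoriallyFiniteIn A (T₂ ∩ F₁) X) (M : A) :
    HasLeftApprox A (star A T₁ X) M := by
  obtain ⟨aM, fM, iM, pM, hsM, haM, hfM⟩ := h₁.2.2.2 M
  obtain ⟨T₀, ℓ₂, hT₀, hfac₂⟩ := (hT₂ fM).2
  obtain ⟨a', h₀, i', π₀, hs', ha', hh₀⟩ := h₁.2.2.2 T₀
  haveI := hs'.epi
  obtain ⟨x₀, ξ, hx₀, hfacξ⟩ := (hX h₀ ⟨h₂.quot_mem hT₀ π₀ hs'.epi, hh₀⟩).2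
  -- the universal map μ : M ⟶ x₀
  -- projective presentation of x₀
  set P : A := Projective.over x₀ with hP
  set ep : P ⟶ x₀ := Projective.π x₀ with hep
  haveI : Epi ep := by rw [hep]; infer_instance
  have hsP : IsSES A (kernel.ι ep) ep := isSES_kernel ep
  -- pullback along μ
  set μ : M ⟶ x₀ := pM ≫ ℓ₂ ≫ π₀ ≫ ξ with hμ
  have hj0 : kernel.ι ep ≫ ep = (0 : kernel ep ⟶ M) ≫ μ := by
    rw [kernel.condition, zero_comp]
  set j : kernel ep ⟶ pullback ep μ := pullback.lift (kernel.ι ep) 0 hj0 with hj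
  have hjfst : j ≫ pullback.fst ep μ = kernel.ι ep := pullback.lift_fst _ _ _
  have hjsnd : j ≫ pullback.snd ep μ = 0 := pullback.lift_snd _ _ _
  have hsQ : IsSES A j (pullback.snd ep μ) := isSES_pullback'' hsP μ hjfst hjsnd
  -- left T₁-approximation of the pullback
  obtain ⟨a₀, lQ, ha₀, hfacQ⟩ := (hT₁ (pullback ep μ)).2
  -- the pushout E₁
  set lam : kernel ep ⟶ a₀ := j ≫ lQ with hlam
  set π₁ : pushout lam (kernel.ι ep) ⟶ x₀ :=
    pushout.desc 0 ep (by rw [comp_zero, kernel.condition]) with hπ₁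
  have hinrπ : pushout.inr lam (kernel.ι ep) ≫ π₁ = ep := pushout.inr_desc _ _ _
  have hinlπ : pushout.inl lam (kernel.ι ep) ≫ π₁ = 0 := pushout.inl_desc _ _ _
  have hsPO : IsSES A (pushout.inl lam (kernel.ι ep)) π₁ := isSES_pushout'' hsP lam hinrπ hinlπ
  -- the approximation map ε : M ⟶ E₁
  set ζ : pullback ep μ ⟶ pushout lam (kernel.ι ep) :=
    pullback.fst ep μ ≫ pushout.inr lam (kernel.ι ep) -
      lQ ≫ pushout.inl lam (kernel.ι ep) with hζ
  have hjζ : j ≫ ζ = 0 := by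
    rw [hζ, Preadditive.comp_sub]
    simp only [← Category.assoc]
    rw [hjfst, ← hlam, ← pushout.condition]
    exact sub_self _
  obtain ⟨ε, hε⟩ := hsQ.desc' ζ hjζ
  refine ⟨pushout lam (kernel.ι ep), ε,
    ⟨a₀, x₀, pushout.inl lam (kernel.ι ep), π₁, hsPO, ha₀, hx₀⟩, ?_⟩
  intro E' hE' φ
  obtain ⟨aE, xE, kE, cE, hsE, haE, hxE⟩ := hE'
  haveI := hsE.epi
  haveI := hsE.mono
  -- factor φ ≫ cE through μ
  obtain ⟨u₁, hu₁⟩ := hsM.desc' (φ ≫ cE) (h₁.homZero haM (hH.1 hxE).2 _)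
  obtain ⟨u₂, hu₂⟩ := hfac₂ xE (hH.1 hxE).1 u₁
  obtain ⟨u₃, hu₃⟩ := hs'.desc' u₂ (h₁.homZero ha' (hH.1 hxE).2 _)
  obtain ⟨χ, hχ⟩ := hfacξ xE hxE u₃
  have hμχ : μ ≫ χ = φ ≫ cE := by
    rw [hμ]
    simp only [Category.assoc]
    rw [hχ, hu₃, hu₂, hu₁]
  -- lift along the projective
  set η : P ⟶ E' := Projective.factorThru (ep ≫ χ) cE with hη
  have hηc : η ≫ cE = ep ≫ χ := Projective.factorThru_comp _ _
  -- the comparison map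
  have hζ'c : (pullback.fst ep μ ≫ η - pullback.snd ep μ ≫ φ) ≫ cE = 0 := by
    rw [Preadditive.sub_comp, Category.assoc, hηc, Category.assoc, ← hμχ]
    simp only [← Category.assoc]
    rw [← pullback.condition]
    exact sub_self _
  obtain ⟨κb, hκb⟩ := hsE.lift' _ hζ'c
  obtain ⟨τ, hτ⟩ := hfacQ aE haE κb
  have hcondσ : lam ≫ τ ≫ kE = kernel.ι ep ≫ η := by
    have h1 : lam ≫ τ ≫ kE = j ≫ κb ≫ kE := by
      rw [hlam, Category.assoc]
      congr 1
      simp only [← Category.assoc]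
      rw [hτ]
    rw [h1, hκb, Preadditive.comp_sub, ← Category.assoc, hjfst, ← Category.assoc, hjsnd,
      zero_comp, sub_zero]
  refine ⟨pushout.desc (τ ≫ kE) η hcondσ, ?_⟩
  haveI := hsQ.epi
  have hfin : ζ ≫ pushout.desc (τ ≫ kE) η hcondσ = pullback.snd ep μ ≫ φ := by
    rw [hζ, Preadditive.sub_comp, Category.assoc, pushout.inr_desc, Category.assoc,
      pushout.inl_desc]
    simp only [← Category.assoc]
    rw [hτ, hκb]
    exact sub_sub_cancel _ _
  rw [← cancel_epi (pullback.snd ep μ)]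
  simp only [← Category.assoc]
  rw [hε, hfin]

end HeavyLemmas

section HeavyLemmas2

variable {A}
variable {T₁ F₁ T₂ F₂ : Set A}

lemma star_hasRightApprox [EnoughInjectives A] (h₁ : IsTorsionPair A T₁ F₁)
    (h₂ : IsTorsionPair A T₂ F₂)
    (hF₁ : FunctoriallyFinite A F₁) (hF₂ : FunctoriallyFinite A F₂)
    {X Y : Set A} (hH : IsTorsionPairIn A (T₂ ∩ F₁) X Y)
    (hY : FunctoriallyFiniteIn A (T₂ ∩ F₁) Y) (M : A) :
    HasRightApprox A (star A Y F₂) M := by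
  obtain ⟨tM, fM, iM, pM, hsM, htM, hfM⟩ := h₂.2.2.2 M
  obtain ⟨F₀, r₁, hF₀, hfac₁⟩ := (hF₁ tM).1
  obtain ⟨k₀, f₀', i₀, p₀, hs₀, hk₀, hf₀'⟩ := h₂.2.2.2 F₀
  haveI := hs₀.mono
  obtain ⟨y₀, η₀, hy₀, hfacη⟩ := (hY k₀ ⟨hk₀, h₁.sub_mem hF₀ i₀ hs₀.mono⟩).1
  -- injective copresentation of y₀
  set I : A := Injective.under y₀ with hI
  haveI : Injective I := by rw [hI]; infer_instance
  set iI : y₀ ⟶ I := Injective.ι y₀ with hiI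
  haveI : Mono iI := by rw [hiI]; infer_instance
  have hsI : IsSES A iI (cokernel.π iI) := isSES_cokernel iI
  set ν : y₀ ⟶ M := η₀ ≫ i₀ ≫ r₁ ≫ iM with hν
  -- pushout along ν
  set qC : pushout ν iI ⟶ cokernel iI :=
    pushout.desc 0 (cokernel.π iI) (by rw [comp_zero, cokernel.condition]) with hqC
  have hinlq : pushout.inl ν iI ≫ qC = 0 := pushout.inl_desc _ _ _
  have hinrq : pushout.inr ν iI ≫ qC = cokernel.π iI := pushout.inr_desc _ _ _
  have hsQ : IsSES A (pushout.inl ν iI) qC := isSES_pushout'' hsI ν hinrq hinlq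
  -- right F₂-approximation of the pushout
  obtain ⟨f₀, rQ, hf₀, hfacQ⟩ := (hF₂ (pushout ν iI)).1
  set rho : f₀ ⟶ cokernel iI := rQ ≫ qC with hrho
  -- pullback E₁
  have hy0cond : iI ≫ cokernel.π iI = (0 : y₀ ⟶ f₀) ≫ rho := by
    rw [cokernel.condition, zero_comp]
  set jy : y₀ ⟶ pullback (cokernel.π iI) rho := pullback.lift iI 0 hy0cond with hjy
  have hjfst : jy ≫ pullback.fst (cokernel.π iI) rho = iI := pullback.lift_fst _ _ _
  have hjsnd : jy ≫ pullback.snd (cokernel.π iI) rho = 0 := pullback.lift_snd _ _ _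
  have hsPB : IsSES A jy (pullback.snd (cokernel.π iI) rho) := isSES_pullback'' hsI rho hjfst hjsnd
  -- the approximation map ε : E₁ ⟶ M
  set ζ : pullback (cokernel.π iI) rho ⟶ pushout ν iI :=
    pullback.fst (cokernel.π iI) rho ≫ pushout.inr ν iI -
      pullback.snd (cokernel.π iI) rho ≫ rQ with hζ
  have hζq : ζ ≫ qC = 0 := by
    rw [hζ, Preadditive.sub_comp]
    simp only [Category.assoc]
    rw [hinrq, ← hrho, ← pullback.condition]
    exact sub_self _
  obtain ⟨ε, hε⟩ := hsQ.lift' ζ hζq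
  refine ⟨pullback (cokernel.π iI) rho, ε,
    ⟨y₀, f₀, jy, pullback.snd (cokernel.π iI) rho, hsPB, hy₀, hf₀⟩, ?_⟩
  intro E' hE' φ
  obtain ⟨yE, fE, kE, cE, hsE, hyE, hfE⟩ := hE'
  haveI := hsE.mono
  haveI := hsE.epi
  -- factor kE ≫ φ through ν
  obtain ⟨u₁, hu₁⟩ := hsM.lift' (kE ≫ φ) (h₂.homZero (hH.2.1 hyE).1 hfM _)
  obtain ⟨u₂, hu₂⟩ := hfac₁ yE (hH.2.1 hyE).2 u₁
  obtain ⟨u₃, hu₃⟩ := hs₀.lift' u₂ (h₂.homZero (hH.2.1 hyE).1 hf₀' _)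
  obtain ⟨χ, hχ⟩ := hfacη yE hyE u₃
  have hχν : χ ≫ ν = kE ≫ φ := by
    rw [hν]
    simp only [← Category.assoc]
    rw [hχ, hu₃, hu₂, hu₁]
  -- extend along the injective
  set η : E' ⟶ I := Injective.factorThru (χ ≫ iI) kE with hη
  have hηc : kE ≫ η = χ ≫ iI := Injective.comp_factorThru _ _
  -- the comparison map
  have hζ'' : kE ≫ (η ≫ pushout.inr ν iI - φ ≫ pushout.inl ν iI) = 0 := by
    rw [Preadditive.comp_sub]
    simp only [← Category.assoc]
    rw [hηc, ← hχν]
    simp only [Category.assoc]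
    rw [← pushout.condition]
    exact sub_self _
  obtain ⟨κb, hκb⟩ := hsE.desc' _ hζ''
  obtain ⟨τ, hτ⟩ := hfacQ fE hfE κb
  have h2 : (cE ≫ τ) ≫ rQ = η ≫ pushout.inr ν iI - φ ≫ pushout.inl ν iI := by
    rw [Category.assoc, hτ, hκb]
  have hcondσ : η ≫ cokernel.π iI = (cE ≫ τ) ≫ rho := by
    rw [hrho]
    simp only [← Category.assoc]
    rw [h2, Preadditive.sub_comp]
    simp only [Category.assoc]
    rw [hinrq, hinlq, comp_zero, sub_zero]
  refine ⟨pullback.lift η (cE ≫ τ) hcondσ, ?_⟩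
  haveI := hsQ.mono
  rw [← cancel_mono (pushout.inl ν iI)]
  simp only [Category.assoc]
  rw [hε, hζ, Preadditive.comp_sub]
  simp only [← Category.assoc]
  rw [pullback.lift_fst, pullback.lift_snd, h2, sub_sub_cancel]

end HeavyLemmas2

/-- the bijection restricted to functorially finite torsion pairs.
Let `A` be an abelian category with enough projectives and enough injectives, and let
`t₁ = (T₁, F₁) ≤ t₂ = (T₂, F₂)` be torsion pairs in `A` whose four classes are all
functorially finite; set `H = T₂ ∩ F₁`.  Then `Φ(T, F) = (T ∩ F₁, T₂ ∩ F)` and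
`Ψ(X, Y) = (T₁ ∗ X, Y ∗ F₂)` restrict to mutually inverse, order-preserving bijections
between functorially finite torsion pairs `(T, F)` in `A` with `T₁ ⊆ T ⊆ T₂` and torsion
pairs in `H` whose classes are functorially finite in the full subcategory on `H`. -/
theorem stmt15 [EnoughProjectives A] [EnoughInjectives A]
    (T₁ F₁ T₂ F₂ : Set A)
    (h₁ : IsTorsionPair A T₁ F₁) (h₂ : IsTorsionPair A T₂ F₂) (h12 : T₁ ⊆ T₂)
    (hT₁ : FunctoriallyFinite A T₁) (hF₁ : FunctoriallyFinite A F₁)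
    (hT₂ : FunctoriallyFinite A T₂) (hF₂ : FunctoriallyFinite A F₂) :
    -- `Φ` is well defined on functorially finite torsion pairs in the interval
    (∀ T F : Set A, IsTorsionPair A T F → T₁ ⊆ T → T ⊆ T₂ →
      FunctoriallyFinite A T → FunctoriallyFinite A F →
      IsTorsionPairIn A (T₂ ∩ F₁) (T ∩ F₁) (T₂ ∩ F) ∧
        FunctoriallyFiniteIn A (T₂ ∩ F₁) (T ∩ F₁) ∧
        FunctoriallyFiniteIn A (T₂ ∩ F₁) (T₂ ∩ F)) ∧
    -- `Ψ` is well defined on relatively functorially finite torsion pairs in the heart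
    (∀ X Y : Set A, IsTorsionPairIn A (T₂ ∩ F₁) X Y →
      FunctoriallyFiniteIn A (T₂ ∩ F₁) X → FunctoriallyFiniteIn A (T₂ ∩ F₁) Y →
      IsTorsionPair A (star A T₁ X) (star A Y F₂) ∧
        T₁ ⊆ star A T₁ X ∧ star A T₁ X ⊆ T₂ ∧
        FunctoriallyFinite A (star A T₁ X) ∧ FunctoriallyFinite A (star A Y F₂)) ∧
    -- `Ψ ∘ Φ = id`
    (∀ T F : Set A, IsTorsionPair A T F → T₁ ⊆ T → T ⊆ T₂ →
      FunctoriallyFinite A T → FunctoriallyFinite A F →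
      star A T₁ (T ∩ F₁) = T ∧ star A (T₂ ∩ F) F₂ = F) ∧
    -- `Φ ∘ Ψ = id`
    (∀ X Y : Set A, IsTorsionPairIn A (T₂ ∩ F₁) X Y →
      FunctoriallyFiniteIn A (T₂ ∩ F₁) X → FunctoriallyFiniteIn A (T₂ ∩ F₁) Y →
      (star A T₁ X) ∩ F₁ = X ∧ T₂ ∩ (star A Y F₂) = Y) ∧
    -- `Φ` is order-preserving
    (∀ T T' : Set A, T ⊆ T' → T ∩ F₁ ⊆ T' ∩ F₁) ∧
    -- `Ψ` is order-preserving
    (∀ X X' : Set A, X ⊆ X' → star A T₁ X ⊆ star A T₁ X') := by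
  have hH0 : ∀ {Z : A}, IsZero Z → Z ∈ T₂ ∩ F₁ :=
    fun hZ => ⟨h₂.zero_mem_torsion hZ, h₁.zero_mem_torsionFree hZ⟩
  refine ⟨?_, ?_, ?_, ?_, fun T T' h M hM => ⟨h hM.1, hM.2⟩, ?_⟩
  · intro T F h hT1 hT2 hT hF
    exact ⟨phi_isTorsionPairIn h₁ h₂ h hT1 hT2, (phi_ff h₁ h₂ h hT1 hT2 hT hF).1,
      (phi_ff h₁ h₂ h hT1 hT2 hT hF).2⟩
  · intro X Y hH hX hY
    have htp := psi_isTorsionPair h₁ h₂ h12 hH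
    refine ⟨htp, subset_star_left (fun {Z} hZ => hH.zero_mem_X hZ (hH0 hZ)), ?_, ?_, ?_⟩
    · rintro M ⟨B, C, f, g, hs, hB, hC⟩
      exact h₂.ext_mem hs (h12 hB) (hH.1 hC).1
    · exact fun M => ⟨tp_hasRightApprox_torsion htp M,
        star_hasLeftApprox h₁ h₂ hT₁ hT₂ hH hX M⟩
    · exact fun M => ⟨star_hasRightApprox h₁ h₂ hF₁ hF₂ hH hY M,
        tp_hasLeftApprox_free htp M⟩
  · intro T F h hT1 hT2 _ _
    exact ⟨psiPhi_torsion h₁ h hT1, psiPhi_free h₂ h hT2⟩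
  · intro X Y hH _ _
    exact ⟨phiPsi_X h₁ hH, phiPsi_Y h₂ hH⟩
  · rintro X X' hsub M ⟨B, C, f, g, hs, hB, hC⟩
    exact ⟨B, C, f, g, hs, hB, hsub hC⟩
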